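/- arXiv:1804.09008 — 2 statements merged into one kernel-verified Lean document; each statement's English description precedes it below -/
import Mathlib

section
/- Let G and H be topological groups and φ : H → G a continuous group homomorphism with dense image. Let O ≤ G be an open subgroup. If {h_i | i ∈ I} is a complete set of left coset representatives of φ⁻¹(O) in H, then {φ(h_i) | i ∈ I} is a complete set of left coset representatives of O in G. In particular, the index [G : O] equals [H : φ⁻¹(O)]. -/
/-- Coset representatives transfer along a continuous homomorphism with dense image,
and in particular the indices `[G : O]` and `[H : φ⁻¹(O)]` agree. -/
theorem stmt_0 {G H : Type*} [Group G] [TopologicalSpace G] [IsTopologicalGroup G]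
    [Group H] [TopologicalSpace H] [IsTopologicalGroup H]
    (φ : H →* G) (hφcont : Continuous φ) (hφdense : DenseRange φ)
    (O : Subgroup G) (hO : IsOpen (O : Set G))
    {I : Type*} (h : I → H)
    (hrep : Function.Bijective fun i => (QuotientGroup.mk (h i) : H ⧸ O.comap φ)) :
    (Function.Bijective fun i => (QuotientGroup.mk (φ (h i)) : G ⧸ O)) ∧
      O.index = (O.comap φ).index := by
  have key : Function.Bijective fun i => (QuotientGroup.mk (φ (h i)) : G ⧸ O) := by
    constructor
    · intro i j hij
      apply hrep.injective
      simp only [QuotientGroup.eq] at hij ⊢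
      simpa [Subgroup.mem_comap, map_mul, map_inv] using hij
    · intro q
      obtain ⟨g, rfl⟩ := QuotientGroup.mk_surjective q
      have hopen : IsOpen {x : G | g⁻¹ * x ∈ O} :=
        hO.preimage (continuous_const.mul continuous_id)
      have hne : {x : G | g⁻¹ * x ∈ O}.Nonempty := ⟨g, by simp [O.one_mem]⟩
      obtain ⟨h', hh'⟩ := hφdense.exists_mem_open hopen hne
      simp only [Set.mem_setOf_eq] at hh'
      obtain ⟨i, hi⟩ := hrep.surjective (QuotientGroup.mk h')
      refine ⟨i, ?_⟩
      simp only at hi ⊢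
      rw [QuotientGroup.eq] at hi ⊢
      have : (φ (h i))⁻¹ * φ h' ∈ O := by
        simpa [Subgroup.mem_comap, map_mul, map_inv] using hi
      have hg : (φ h')⁻¹ * g ∈ O := by
        have := O.inv_mem hh'
        simpa [mul_inv_rev] using this
      have := O.mul_mem this hg
      simpa [mul_assoc] using this
  refine ⟨key, ?_⟩
  rw [Subgroup.index, Subgroup.index,
    ← Nat.card_congr (Equiv.ofBijective _ key),
    Nat.card_congr (Equiv.ofBijective _ hrep)]
end

section
/- Let H be a topological group, G a totally disconnected locally compact group, φ : H → G a continuous homomorphism with dense image, and U a compact open subgroup of G. Set K = φ⁻¹(U). If L ≤ K has finite index in K, then the closure of φ(L) in G is a compact open subgroup of G of finite index in U; moreover [cl(φ(L)) : V] = [L : φ⁻¹(V) ∩ L] for any open subgroup V ≤ cl(φ(L)). -/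
open Subgroup Pointwise

/-- Dense subgroup transfer of relative index to an open subgroup of the closure. -/
lemma aux_relIndex_closure {G : Type*} [Group G] [TopologicalSpace G] [IsTopologicalGroup G]
    (D V : Subgroup G) (hVo : IsOpen (V : Set G)) :
    V.relIndex D.topologicalClosure = V.relIndex D := by
  set W := D.topologicalClosure with hW
  have hDW : D ≤ W := D.le_topologicalClosure
  have hrel : ∀ (a b : D), (QuotientGroup.leftRel (V.subgroupOf D)).r a b ↔
      (QuotientGroup.leftRel (V.subgroupOf W)).r (inclusion hDW a) (inclusion hDW b) := by
    intro a b
    rw [QuotientGroup.leftRel_apply, QuotientGroup.leftRel_apply]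
    simp [mem_subgroupOf]
  let f : D ⧸ V.subgroupOf D → W ⧸ V.subgroupOf W :=
    Quotient.map' (inclusion hDW) (fun a b h => (hrel a b).mp h)
  have hinj : Function.Injective f := by
    intro a b
    induction a using Quotient.inductionOn'
    induction b using Quotient.inductionOn'
    intro h
    simp only [f, Quotient.map'_mk''] at h
    rw [Quotient.eq''] at h ⊢
    exact (hrel _ _).mpr h
  have hsurj : Function.Surjective f := by
    intro w
    induction w using Quotient.inductionOn' with
    | h w =>
      have hwmem : (w : G) ∈ _root_.closure (D : Set G) := w.2
      have hopen : IsOpen {x : G | (w : G)⁻¹ * x ∈ V} :=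
        hVo.preimage (continuous_const.mul continuous_id)
      have hwin : (w : G) ∈ {x : G | (w : G)⁻¹ * x ∈ V} := by
        simpa [Set.mem_setOf_eq] using V.one_mem
      obtain ⟨d, hd1, hd2⟩ := _root_.mem_closure_iff.mp hwmem _ hopen hwin
      refine ⟨Quotient.mk'' ⟨d, hd2⟩, ?_⟩
      show Quotient.mk'' _ = Quotient.mk'' w
      rw [Quotient.eq'']
      rw [QuotientGroup.leftRel_apply]
      simp only [mem_subgroupOf]
      show ((inclusion hDW ⟨d, hd2⟩ : W) : G)⁻¹ * (w : G) ∈ V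
      have : (w : G)⁻¹ * d ∈ V := hd1
      simpa using V.inv_mem this
  have : Nat.card (W ⧸ V.subgroupOf W) = Nat.card (D ⧸ V.subgroupOf D) :=
    (Nat.card_congr (Equiv.ofBijective f ⟨hinj, hsurj⟩)).symm
  rw [relIndex, relIndex, index_eq_card, index_eq_card, this]

/-- Let `φ : H → G` be a continuous homomorphism with dense image into a t.d.l.c. group,
`U ≤ G` compact open, `K = φ⁻¹(U)` and `L ≤ K` of finite index in `K`. Then the closure
of `φ(L)` is a compact open subgroup of finite index in `U`, and for every open subgroup
`V` of the closure of `φ(L)` one has `[cl(φ(L)) : V] = [L : φ⁻¹(V) ∩ L]`. -/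
theorem stmt_15 {H G : Type*} [Group H] [TopologicalSpace H] [IsTopologicalGroup H]
    [Group G] [TopologicalSpace G] [IsTopologicalGroup G]
    [LocallyCompactSpace G] [TotallyDisconnectedSpace G] [T2Space G]
    (φ : H →* G) (hφcont : Continuous φ) (hφdense : DenseRange φ)
    (U : Subgroup G) (hUc : IsCompact (U : Set G)) (hUo : IsOpen (U : Set G))
    (L : Subgroup H) (hLK : L ≤ U.comap φ) (hLfin : L.relIndex (U.comap φ) ≠ 0) :
    IsCompact (((L.map φ).topologicalClosure : Subgroup G) : Set G) ∧
      IsOpen (((L.map φ).topologicalClosure : Subgroup G) : Set G) ∧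
      (L.map φ).topologicalClosure.relIndex U ≠ 0 ∧
      ∀ V : Subgroup G, IsOpen (V : Set G) → V ≤ (L.map φ).topologicalClosure →
        V.relIndex (L.map φ).topologicalClosure = (V.comap φ ⊓ L).relIndex L := by
  set K := U.comap φ with hK
  set W := (L.map φ).topologicalClosure with hWdef
  have hUclosed : IsClosed (U : Set G) := hUc.isClosed
  have hDU : L.map φ ≤ U := map_le_iff_le_comap.mpr hLK
  have hWU : W ≤ U := topologicalClosure_minimal _ hDU hUclosed
  have hWclosed : IsClosed (W : Set G) := isClosed_topologicalClosure _
  have hWc : IsCompact (W : Set G) := hUc.of_isClosed_subset hWclosed hWU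
  -- finiteness of the quotient of K by L
  have hQfin : Finite (K ⧸ L.subgroupOf K) := by
    have : Nat.card (K ⧸ L.subgroupOf K) ≠ 0 := by
      rwa [← index_eq_card]
    exact (Nat.card_ne_zero.mp this).2
  -- U is contained in the closure of φ(K)
  have hUsub : (U : Set G) ⊆ _root_.closure ((K.map φ : Subgroup G) : Set G) := by
    intro u hu
    rw [_root_.mem_closure_iff]
    intro O hO hOu
    obtain ⟨h, hh⟩ := hφdense.exists_mem_open (hO.inter hUo) ⟨u, hOu, hu⟩
    exact ⟨φ h, hh.1, ⟨h, by simpa [hK] using hh.2, rfl⟩⟩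
  -- covering of U by finitely many cosets of W
  have hcover : (U : Set G) ⊆ ⋃ q : K ⧸ L.subgroupOf K,
      (φ ((q.out : K) : H) : G) • (W : Set G) := by
    have hclosed : IsClosed (⋃ q : K ⧸ L.subgroupOf K, (φ ((q.out : K) : H) : G) • (W : Set G)) :=
      isClosed_iUnion_of_finite fun q => hWclosed.smul _
    refine fun u hu => ?_
    refine _root_.closure_minimal ?_ hclosed (hUsub hu)
    rintro x ⟨k, hk, rfl⟩
    refine Set.mem_iUnion.mpr ⟨Quotient.mk'' ⟨k, hk⟩, ?_⟩
    have hrel : ((Quotient.mk'' ⟨k, hk⟩ : K ⧸ L.subgroupOf K).out)⁻¹ * ⟨k, hk⟩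
        ∈ L.subgroupOf K := by
      rw [← QuotientGroup.leftRel_apply]
      exact Quotient.exact' (Quotient.out_eq' _)
    rw [mem_subgroupOf] at hrel
    refine ⟨φ (((Quotient.mk'' ⟨k, hk⟩ : K ⧸ L.subgroupOf K).out)⁻¹ * ⟨k, hk⟩ : K), ?_, ?_⟩
    · exact (L.map φ).le_topologicalClosure ⟨_, hrel, rfl⟩
    · simp [smul_eq_mul, ← map_mul]
  -- finite index of W in U
  have hWUfin : W.relIndex U ≠ 0 := by
    have hfin : Finite (U ⧸ W.subgroupOf U) := by
      refine Finite.of_surjective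
        (fun q : K ⧸ L.subgroupOf K =>
          (Quotient.mk'' ⟨φ (q.out : K), (q.out : K).2⟩ : U ⧸ W.subgroupOf U)) ?_
      intro x
      induction x using Quotient.inductionOn' with
      | h u =>
        obtain ⟨q, hq⟩ := Set.mem_iUnion.mp (hcover u.2)
        obtain ⟨w, hw, hwu⟩ := hq
        refine ⟨q, ?_⟩
        rw [Quotient.eq'', QuotientGroup.leftRel_apply, mem_subgroupOf]
        show (φ (q.out : K))⁻¹ * (u : G) ∈ W
        rw [← hwu]
        simpa [smul_eq_mul] using hw
    rw [relIndex, index_eq_card]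
    exact Nat.card_ne_zero.mpr ⟨⟨Quotient.mk'' 1⟩, hfin⟩
  -- openness of W
  have hWopen : IsOpen (W : Set G) := by
    have : CompactSpace U := isCompact_iff_compactSpace.mp hUc
    have hFI : (W.subgroupOf U).FiniteIndex := ⟨hWUfin⟩
    have hcl : IsClosed ((W.subgroupOf U : Subgroup U) : Set U) :=
      hWclosed.preimage continuous_subtype_val
    have hop : IsOpen ((W.subgroupOf U : Subgroup U) : Set U) :=
      Subgroup.isOpen_of_isClosed_of_finiteIndex _ hcl
    rw [isOpen_induced_iff] at hop
    obtain ⟨t, ht, hts⟩ := hop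
    have : (W : Set G) = t ∩ U := by
      ext x
      constructor
      · intro hx
        have hxU : x ∈ U := hWU hx
        have : (⟨x, hxU⟩ : U) ∈ (Subtype.val ⁻¹' t : Set U) := by
          rw [hts]; exact hx
        exact ⟨this, hxU⟩
      · rintro ⟨hxt, hxU⟩
        have : (⟨x, hxU⟩ : U) ∈ (Subtype.val ⁻¹' t : Set U) := hxt
        rw [hts] at this
        exact this
    rw [this]
    exact ht.inter hUo
  refine ⟨hWc, hWopen, hWUfin, ?_⟩
  intro V hVo hVW
  rw [inf_relIndex_right, relIndex_comap, hWdef, aux_relIndex_closure _ _ hVo]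
end
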